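/- For all words w, x, y, z with wy ≠ yw and all k ≥ 1, the words x w^k y w^{k−1} z and x w^{k−1} y w^k z are distinct and k-abelian equivalent. Consequently, if a language L contains x w^* y w^* z for some words w, x, y, z with wy ≠ yw, then L has no finite SSF. -/
import Mathlib


/-- `npow w n` is the word `w` repeated `n` times. -/
def npow {α : Type*} (w : List α) : ℕ → List α
  | 0 => []
  | n + 1 => w ++ npow w n

/-- `occ w x` is the number of occurrences of `x` as a factor of `w`,
i.e. the number of factorizations `w = s ++ x ++ t`. -/
def occ {α : Type*} [DecidableEq α] (w x : List α) : ℕ :=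
  ((List.range (w.length + 1)).filter (fun i => x <+: w.drop i)).length

/-- A nonempty word is primitive if it is not a power of a shorter word. -/
def Primitive {α : Type*} (p : List α) : Prop :=
  p ≠ [] ∧ ∀ (q : List α) (n : ℕ), p = npow q n → q = p

/-- `u` and `v` are `k`-abelian equivalent. -/
def KAbEq {α : Type*} [DecidableEq α] (k : ℕ) (u v : List α) : Prop :=
  ∀ x : List α, x.length ≤ k → occ u x = occ v x

/-- `X` is a separating set of factors of `L`. -/
def IsSSF {α : Type*} [DecidableEq α] (X L : Set (List α)) : Prop :=
  ∀ u ∈ L, ∀ v ∈ L, u ≠ v → ∃ x ∈ X, occ u x ≠ occ v x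

/-- `L` has a finite separating set of factors. -/
def HasFiniteSSF {α : Type*} [DecidableEq α] (L : Set (List α)) : Prop :=
  ∃ X : Set (List α), X.Finite ∧ IsSSF X L

namespace SSFAux

variable {α : Type*} [DecidableEq α]

theorem npow_length (w : List α) (n : ℕ) : (npow w n).length = n * w.length := by
  induction n with
  | zero => simp [npow]
  | succ n ih => simp [npow, ih]; ring

theorem npow_add (w : List α) (a b : ℕ) : npow w (a + b) = npow w a ++ npow w b := by
  induction a with
  | zero => simp [npow]
  | succ a ih => simp [npow, Nat.succ_add, ih]

theorem npow_succ_right (w : List α) (n : ℕ) : npow w (n + 1) = npow w n ++ w := by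
  have := npow_add w n 1
  simpa [npow] using this

/-- the list of all length-`m` windows of `u` -/
def win (m : ℕ) (u : List α) : List (List α) :=
  (List.range (u.length + 1 - m)).map (fun i => (u.drop i).take m)

theorem win_append (m : ℕ) (hm : 1 ≤ m) (a b : List α) (hb : m - 1 ≤ b.length) :
    win m (a ++ b) = win m (a ++ b.take (m - 1)) ++ win m b := by
  have h1 : (a ++ b).length + 1 - m = a.length + (b.length + 1 - m) := by
    simp; omega
  have h2 : (a ++ b.take (m - 1)).length + 1 - m = a.length := by
    simp; omega
  unfold win
  rw [h1, h2, List.range_add, List.map_append, List.map_map]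
  congr 1
  · apply List.map_congr_left
    intro i hi
    have hi' : i < a.length := by simpa using hi
    rw [List.drop_append_of_le_length hi'.le, List.drop_append_of_le_length hi'.le,
      List.take_append, List.take_append, List.take_take]
    have hlen : (a.drop i).length = a.length - i := by simp
    have hle : m - (a.drop i).length ≤ m - 1 := by rw [hlen]; omega
    rw [inf_eq_left.mpr hle]
  · apply List.map_congr_left
    intro i hi
    simp only [Function.comp]
    rw [List.drop_append, List.drop_eq_nil_of_le (Nat.le_add_right _ _),
      Nat.add_sub_cancel_left]
    simp

theorem length_filter_range_of_lt {A B : ℕ} (q : ℕ → Bool) (hAB : B ≤ A)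
    (h : ∀ i, q i = true → i < B) :
    ((List.range A).filter q).length = ((List.range B).filter q).length := by
  have hA : A = B + (A - B) := by omega
  rw [hA, List.range_add, List.filter_append]
  have hnil : (List.filter q (List.map (fun x => B + x) (List.range (A - B)))) = [] := by
    rw [List.filter_eq_nil_iff]
    intro i hi
    simp only [List.mem_map, List.mem_range] at hi
    obtain ⟨j, _, rfl⟩ := hi
    intro hq
    have := h _ hq
    omega
  simp [hnil]

theorem occ_eq_count_win (u t : List α) (ht : t ≠ []) :
    occ u t = (win t.length u).count t := by
  set m := t.length with hm
  have hm1 : 1 ≤ m := by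
    cases t with
    | nil => exact absurd rfl ht
    | cons a l => simp [hm]
  unfold occ win
  rw [List.count_eq_countP, List.countP_map, List.countP_eq_length_filter]
  have key2 : ∀ i : ℕ, ((u.drop i).take m = t) → i < u.length + 1 - m := by
    intro i h
    have h' : ((u.drop i).take m).length = m := by rw [h]
    simp only [List.length_take, List.length_drop] at h'
    omega
  calc (List.filter (fun i => decide (t <+: u.drop i)) (List.range (u.length + 1))).length
      = (List.filter (fun i => decide ((u.drop i).take m = t)) (List.range (u.length + 1))).length := by
        congr 1
        apply List.filter_congr
        intro i _
        apply Bool.eq_iff_iff.mpr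
        simp only [decide_eq_true_eq]
        constructor
        · intro h
          exact (List.prefix_iff_eq_take.mp h).symm
        · intro h
          rw [← h]
          exact List.take_prefix _ _
    _ = (List.filter (fun i => decide ((u.drop i).take m = t)) (List.range (u.length + 1 - m))).length := by
        apply length_filter_range_of_lt
        · omega
        · intro i hq
          simp only [decide_eq_true_eq] at hq
          exact key2 i hq
    _ = _ := by
        congr 1
        apply List.filter_congr
        intro i _
        apply Bool.eq_iff_iff.mpr
        simp [Function.comp]

theorem occ_nil (u : List α) : occ u ([] : List α) = u.length + 1 := by
  unfold occ
  have h : (List.filter (fun i => decide (([]:List α) <+: u.drop i)) (List.range (u.length + 1)))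
      = List.range (u.length + 1) := by
    apply List.filter_eq_self.mpr
    intro i _
    simp
  rw [h, List.length_range]

theorem count_core (w x y z t : List α) (hw : w ≠ []) (n : ℕ) (ht : t ≠ [])
    (hmn : t.length ≤ n + 1) :
    occ (x ++ (npow w (n + 1) ++ (y ++ (npow w n ++ z)))) t
      = occ (x ++ (npow w n ++ (y ++ (npow w (n + 1) ++ z)))) t := by
  set m := t.length with hm
  have hm1 : 1 ≤ m := by
    cases t with
    | nil => exact absurd rfl ht
    | cons a l => simp [hm]
  have hp : 1 ≤ w.length := List.length_pos_iff.mpr hw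
  set A := npow w n with hA
  have hAl : A.length = n * w.length := npow_length w n
  have hmA : m - 1 ≤ A.length := by
    have hn : n ≤ n * w.length := Nat.le_mul_of_pos_right n hp
    omega
  set W := npow w (n + 1) with hW
  have hWwA : W = w ++ A := rfl
  have hWAw : W = A ++ w := npow_succ_right w n
  set B := A ++ z with hB
  have hmB : m - 1 ≤ B.length := by
    have : B.length = A.length + z.length := by rw [hB]; simp
    omega
  set F := A.take (m - 1) with hF
  set s := A.drop (A.length - (m - 1)) with hs
  have hsl : s.length = m - 1 := by
    rw [hs, List.length_drop]
    omega
  -- take facts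
  have tk1 : ∀ r : List α, (A ++ r).take (m - 1) = F := fun r =>
    List.take_append_of_le_length hmA
  have tk2 : ∀ r : List α, (W ++ r).take (m - 1) = F := by
    intro r
    rw [hWAw, List.append_assoc]
    exact tk1 _
  have tkB : B.take (m - 1) = F := tk1 z
  have tks : ∀ r : List α, (s ++ r).take (m - 1) = s := by
    intro r
    rw [List.take_append_of_le_length (le_of_eq hsl.symm), List.take_of_length_le (le_of_eq hsl)]
  have hsW : W.drop (W.length - (m - 1)) = s := by
    rw [hWwA]
    have harith : (w ++ A).length - (m - 1) = w.length + (A.length - (m - 1)) := by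
      rw [List.length_append]
      omega
    rw [harith, List.drop_append,
      List.drop_eq_nil_of_le (Nat.le_add_right _ _), Nat.add_sub_cancel_left]
    simp [hs]
  have hVeq : W ++ z = w ++ B := by
    rw [hWwA, hB, List.append_assoc]
  -- splits for u
  have S1 : win m (x ++ (W ++ (y ++ B))) = win m (x ++ F) ++ win m (W ++ (y ++ B)) := by
    have hlen : m - 1 ≤ (W ++ (y ++ B)).length := by
      have : (W ++ (y ++ B)).length = W.length + (y.length + B.length) := by simp
      omega
    rw [win_append m hm1 x _ hlen, tk2]
  have hsplitW : W = W.take (W.length - (m - 1)) ++ s := by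
    rw [← hsW]
    exact (List.take_append_drop _ _).symm
  have S2 : win m (W ++ (y ++ B)) = win m W ++ win m (s ++ (y ++ B)) := by
    have hlen : m - 1 ≤ (s ++ (y ++ B)).length := by
      have : (s ++ (y ++ B)).length = s.length + (y.length + B.length) := by simp
      omega
    calc win m (W ++ (y ++ B))
        = win m ((W.take (W.length - (m - 1)) ++ s) ++ (y ++ B)) := by rw [← hsplitW]
      _ = win m (W.take (W.length - (m - 1)) ++ (s ++ (y ++ B))) := by rw [List.append_assoc]
      _ = win m (W.take (W.length - (m - 1)) ++ (s ++ (y ++ B)).take (m - 1)) ++ win m (s ++ (y ++ B)) :=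
          win_append m hm1 _ _ hlen
      _ = win m W ++ win m (s ++ (y ++ B)) := by rw [tks, ← hsplitW]
  have S3 : win m (s ++ (y ++ B)) = win m ((s ++ y) ++ F) ++ win m B := by
    rw [← List.append_assoc, win_append m hm1 (s ++ y) B hmB, tkB]
  have S4 : win m W = win m (w ++ F) ++ win m A := by
    rw [hWwA, win_append m hm1 w A hmA, ← hF]
  -- splits for v
  have T1 : win m (x ++ (A ++ (y ++ (w ++ B)))) = win m (x ++ F) ++ win m (A ++ (y ++ (w ++ B))) := by
    have hlen : m - 1 ≤ (A ++ (y ++ (w ++ B))).length := by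
      have : (A ++ (y ++ (w ++ B))).length = A.length + (y.length + (w.length + B.length)) := by simp
      omega
    rw [win_append m hm1 x _ hlen, tk1]
  have hsplitA : A = A.take (A.length - (m - 1)) ++ s := by
    rw [hs]
    exact (List.take_append_drop _ _).symm
  have T2 : win m (A ++ (y ++ (w ++ B))) = win m A ++ win m (s ++ (y ++ (w ++ B))) := by
    have hlen : m - 1 ≤ (s ++ (y ++ (w ++ B))).length := by
      have : (s ++ (y ++ (w ++ B))).length = s.length + (y.length + (w.length + B.length)) := by simp
      omega
    calc win m (A ++ (y ++ (w ++ B)))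
        = win m ((A.take (A.length - (m - 1)) ++ s) ++ (y ++ (w ++ B))) := by rw [← hsplitA]
      _ = win m (A.take (A.length - (m - 1)) ++ (s ++ (y ++ (w ++ B)))) := by rw [List.append_assoc]
      _ = win m (A.take (A.length - (m - 1)) ++ (s ++ (y ++ (w ++ B))).take (m - 1)) ++ win m (s ++ (y ++ (w ++ B))) :=
          win_append m hm1 _ _ hlen
      _ = win m A ++ win m (s ++ (y ++ (w ++ B))) := by rw [tks, ← hsplitA]
  have T3 : win m (s ++ (y ++ (w ++ B))) = win m ((s ++ y) ++ F) ++ win m (w ++ B) := by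
    have hlen : m - 1 ≤ (w ++ B).length := by
      have : (w ++ B).length = w.length + B.length := by simp
      omega
    have tkwB : (w ++ B).take (m - 1) = F := by
      rw [← hVeq]
      exact tk2 z
    rw [← List.append_assoc, win_append m hm1 (s ++ y) (w ++ B) hlen, tkwB]
  have T4 : win m (w ++ B) = win m (w ++ F) ++ win m B := by
    rw [win_append m hm1 w B hmB, tkB]
  -- assemble
  rw [occ_eq_count_win _ t ht, occ_eq_count_win _ t ht, ← hm]
  have hVword : x ++ (A ++ (y ++ (W ++ z))) = x ++ (A ++ (y ++ (w ++ B))) := by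
    rw [hVeq]
  rw [hVword, S1, T1, List.count_append, List.count_append, S2, T2, List.count_append,
    List.count_append, S3, T3, List.count_append, List.count_append, S4, T4,
    List.count_append, List.count_append]
  ring

end SSFAux

/-- For `wy ≠ yw` and `k ≥ 1`, the words `x w^k y w^(k-1) z` and
`x w^(k-1) y w^k z` are distinct and `k`-abelian equivalent; consequently any
language containing `x w^* y w^* z` has no finite SSF. -/
theorem stmt15 {α : Type*} [DecidableEq α] (w x y z : List α)
    (hwy : w ++ y ≠ y ++ w) :
    (∀ k, 1 ≤ k →
      x ++ npow w k ++ y ++ npow w (k - 1) ++ z ≠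
        x ++ npow w (k - 1) ++ y ++ npow w k ++ z ∧
      KAbEq k (x ++ npow w k ++ y ++ npow w (k - 1) ++ z)
              (x ++ npow w (k - 1) ++ y ++ npow w k ++ z)) ∧
    ∀ L : Set (List α),
      (∀ i j : ℕ, x ++ npow w i ++ y ++ npow w j ++ z ∈ L) →
      ¬ HasFiniteSSF L := by
  have hw : w ≠ [] := by
    intro h
    apply hwy
    subst h
    simp
  have main : ∀ k, 1 ≤ k →
      x ++ npow w k ++ y ++ npow w (k - 1) ++ z ≠
        x ++ npow w (k - 1) ++ y ++ npow w k ++ z ∧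
      KAbEq k (x ++ npow w k ++ y ++ npow w (k - 1) ++ z)
              (x ++ npow w (k - 1) ++ y ++ npow w k ++ z) := by
    intro k hk
    obtain ⟨n, rfl⟩ : ∃ n, k = n + 1 := ⟨k - 1, by omega⟩
    simp only [Nat.add_sub_cancel]
    constructor
    · -- distinctness
      intro heq
      apply hwy
      have h1 : x ++ (npow w (n + 1) ++ (y ++ (npow w n ++ z)))
          = x ++ (npow w n ++ (y ++ (npow w (n + 1) ++ z))) := by
        simpa only [List.append_assoc] using heq
      have h2 := List.append_cancel_left h1
      have l1 : npow w (n + 1) ++ (y ++ (npow w n ++ z))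
          = npow w n ++ (w ++ (y ++ (npow w n ++ z))) := by
        rw [SSFAux.npow_succ_right]
        simp [List.append_assoc]
      have l2 : npow w n ++ (y ++ (npow w (n + 1) ++ z))
          = npow w n ++ (y ++ (w ++ (npow w n ++ z))) := by
        rw [show npow w (n + 1) = w ++ npow w n from rfl]
        simp [List.append_assoc]
      rw [l1, l2] at h2
      have h3 := List.append_cancel_left h2
      have h4 : (w ++ y) ++ (npow w n ++ z) = (y ++ w) ++ (npow w n ++ z) := by
        simpa [List.append_assoc] using h3
      exact List.append_cancel_right h4
    · -- k-abelian equivalence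
      intro t htk
      by_cases ht : t = []
      · subst ht
        rw [SSFAux.occ_nil, SSFAux.occ_nil]
        simp [SSFAux.npow_length]
        ring
      · have hcore := SSFAux.count_core w x y z t hw n ht htk
        simpa only [List.append_assoc] using hcore
  refine ⟨main, ?_⟩
  rintro L hL ⟨X, hXfin, hX⟩
  set k := hXfin.toFinset.sup List.length + 1 with hkdef
  have hk : 1 ≤ k := Nat.le_add_left 1 _
  have hu : x ++ npow w k ++ y ++ npow w (k - 1) ++ z ∈ L := hL k (k - 1)
  have hv : x ++ npow w (k - 1) ++ y ++ npow w k ++ z ∈ L := hL (k - 1) k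
  obtain ⟨t, htX, hneq⟩ := hX _ hu _ hv (main k hk).1
  apply hneq
  apply (main k hk).2
  have : t.length ≤ hXfin.toFinset.sup List.length :=
    Finset.le_sup (f := List.length) (hXfin.mem_toFinset.mpr htX)
  omega
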